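/- Let p be a prime number with p·1_Λ ≠ 0. Let M be a finitely generated torsion Λ-module which is completely faithful, and let M(p) = {m ∈ M : p^k m = 0 for some k ≥ 0} be its p-primary submodule (a Λ-submodule of M, since p·1_Λ is central). Then M(p) is a pseudo-null Λ-module. -/

import Mathlib

open CategoryTheory

/-- A module is torsion if every element is annihilated by a nonzero ring element. -/
def IsTorsionMod (Λ : Type) [Ring Λ] (M : Type) [AddCommGroup M] [Module Λ M] : Prop :=
  ∀ m : M, ∃ l : Λ, l ≠ 0 ∧ l • m = 0

/-- A finitely generated torsion `Λ`-module is pseudo-null if `Ext¹_Λ(M, Λ) = 0`. -/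
def IsPseudoNull (Λ : Type) [Ring Λ] (M : Type) [AddCommGroup M] [Module Λ M] : Prop :=
  Module.Finite Λ M ∧ IsTorsionMod Λ M ∧
    Subsingleton (((Ext ℤ (ModuleCat Λ) 1).obj (Opposite.op (ModuleCat.of Λ M))).obj
      (ModuleCat.of Λ Λ))

/-- `N` is pseudo-related to a subquotient of `M`: there are submodules `A ≤ B` of `M`,
a submodule `N₁ ≤ N` with `N/N₁` pseudo-null, a pseudo-null submodule `C` of `B/A`, and a
`Λ`-homomorphism `N₁ → (B/A)/C` with pseudo-null kernel and cokernel. -/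
def PseudoRelated (Λ : Type) [Ring Λ] (N M : Type) [AddCommGroup N] [Module Λ N]
    [AddCommGroup M] [Module Λ M] : Prop :=
  ∃ (A B : Submodule Λ M), A ≤ B ∧
    ∃ (N₁ : Submodule Λ N) (C : Submodule Λ (↥B ⧸ A.comap B.subtype))
      (f : N₁ →ₗ[Λ] ((↥B ⧸ A.comap B.subtype) ⧸ C)),
      IsPseudoNull Λ (N ⧸ N₁) ∧ IsPseudoNull Λ C ∧
      IsPseudoNull Λ (LinearMap.ker f) ∧
      IsPseudoNull Λ ((((↥B ⧸ A.comap B.subtype) ⧸ C)) ⧸ LinearMap.range f)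

/-- A finitely generated torsion `Λ`-module `M` is completely faithful if every finitely
generated torsion `Λ`-module `N` which is not pseudo-null and is pseudo-related to a
subquotient of `M` has trivial global annihilator ideal. -/
def CompletelyFaithful (Λ : Type) [Ring Λ] (M : Type) [AddCommGroup M] [Module Λ M] : Prop :=
  ∀ (N : Type) [AddCommGroup N] [Module Λ N],
    Module.Finite Λ N → IsTorsionMod Λ N → ¬ IsPseudoNull Λ N → PseudoRelated Λ N M →
      ∀ l : Λ, (∀ n : N, l • n = 0) → l = 0

/-- The `p`-primary submodule `M(p) = {m ∈ M : pᵏ • m = 0 for some k}`, where `p` acts via the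
central element `p·1_Λ`. -/
def pPrimarySub (Λ : Type) [Ring Λ] (p : ℕ) (M : Type) [AddCommGroup M] [Module Λ M] :
    Submodule Λ M where
  carrier := {m | ∃ k : ℕ, ((p : Λ) ^ k) • m = 0}
  zero_mem' := ⟨0, by simp⟩
  add_mem' := by
    rintro a b ⟨k, hk⟩ ⟨l, hl⟩
    refine ⟨k + l, ?_⟩
    have h1 : ((p : Λ) ^ (k + l)) • a = 0 := by
      rw [add_comm, pow_add, mul_smul, hk, smul_zero]
    have h2 : ((p : Λ) ^ (k + l)) • b = 0 := by
      rw [pow_add, mul_smul, hl, smul_zero]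
    rw [smul_add, h1, h2, add_zero]
  smul_mem' := by
    rintro c m ⟨k, hk⟩
    refine ⟨k, ?_⟩
    have hcomm : (p : Λ) ^ k * c = c * (p : Λ) ^ k := ((Nat.cast_commute p c).pow_left k).eq
    rw [smul_smul, hcomm, mul_smul, hk, smul_zero]

theorem mem_pPrimarySub {Λ : Type} [Ring Λ] {p : ℕ} {M : Type} [AddCommGroup M] [Module Λ M]
    (m : M) : m ∈ pPrimarySub Λ p M ↔ ∃ k : ℕ, ((p : Λ) ^ k) • m = 0 := Iff.rfl


open Limits in
lemma ext1_subsingleton_of_subsingleton (Λ : Type) [Ring Λ] (N : Type) [AddCommGroup N]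
    [Module Λ N] [Subsingleton N] :
    Subsingleton (((Ext ℤ (ModuleCat Λ) 1).obj (Opposite.op (ModuleCat.of Λ N))).obj
      (ModuleCat.of Λ Λ)) := by
  set X := ModuleCat.of Λ N with hXdef
  haveI : Subsingleton X := ‹Subsingleton N›
  have hX : IsZero X := ModuleCat.isZero_of_subsingleton X
  haveI : Projective X := hX.projective
  let P : ProjectiveResolution X := ProjectiveResolution.self X
  let e := P.isoExt (R := ℤ) 1 (ModuleCat.of Λ Λ)
  have hz : IsZero (P.complex.X 1) :=
    HomologicalComplex.isZero_single_obj_X (ComplexShape.down ℕ) 0 X 1 (by omega)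
  have h1 : IsZero ((P.complex.linearYonedaObj ℤ (ModuleCat.of Λ Λ)).X 1) :=
    @ModuleCat.isZero_of_subsingleton ℤ _ _ ⟨fun f g => hz.eq_of_src f g⟩
  have h2 : IsZero ((P.complex.linearYonedaObj ℤ (ModuleCat.of Λ Λ)).homology 1) := by
    rw [← HomologicalComplex.exactAt_iff_isZero_homology]
    exact ShortComplex.exact_of_isZero_X₂ _ h1
  have h3 : IsZero (((Ext ℤ (ModuleCat Λ) 1).obj (Opposite.op X)).obj (ModuleCat.of Λ Λ)) :=
    h2.of_iso e
  have h4 : (𝟙 (((Ext ℤ (ModuleCat Λ) 1).obj (Opposite.op X)).obj (ModuleCat.of Λ Λ))) =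
      (0 : _ ⟶ _) := h3.eq_of_src _ _
  exact ⟨fun a b => (LinearMap.congr_fun (congrArg ModuleCat.Hom.hom h4) a).trans
    (LinearMap.congr_fun (congrArg ModuleCat.Hom.hom h4) b).symm⟩

lemma isPseudoNull_of_subsingleton (Λ : Type) [Ring Λ] [Nontrivial Λ] (N : Type)
    [AddCommGroup N] [Module Λ N] [Subsingleton N] : IsPseudoNull Λ N :=
  ⟨Module.Finite.of_surjective (0 : Λ →ₗ[Λ] N) (fun n => ⟨0, Subsingleton.elim _ _⟩),
    fun _ => ⟨1, one_ne_zero, Subsingleton.elim _ _⟩,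
    ext1_subsingleton_of_subsingleton Λ N⟩

/-- The submodule of elements killed by a fixed power of the central element `p`. -/
def pPowerKilled (Λ : Type) [Ring Λ] (p : ℕ) (K : ℕ) (M : Type) [AddCommGroup M]
    [Module Λ M] : Submodule Λ M where
  carrier := {m | ((p : Λ) ^ K) • m = 0}
  zero_mem' := by simp
  add_mem' := by
    rintro a b ha hb
    show ((p : Λ) ^ K) • (a + b) = 0
    rw [smul_add, ha, hb, add_zero]
  smul_mem' := by
    rintro c m hm
    show ((p : Λ) ^ K) • (c • m) = 0
    have hcomm : (p : Λ) ^ K * c = c * (p : Λ) ^ K := ((Nat.cast_commute p c).pow_left K).eq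
    rw [smul_smul, hcomm, mul_smul, hm, smul_zero]

/-- If `p` is a prime with `p·1_Λ ≠ 0` and `M` is a finitely generated torsion
`Λ`-module which is completely faithful, then its `p`-primary submodule `M(p)` is pseudo-null. -/
theorem isPseudoNull_pPrimary_of_completelyFaithful
    (Λ : Type) [Ring Λ] [IsNoetherianRing Λ] [IsNoetherianRing Λᵐᵒᵖ] [NoZeroDivisors Λ]
    (p : ℕ) (hp : p.Prime) (hpΛ : (p : Λ) ≠ 0)
    (M : Type) [AddCommGroup M] [Module Λ M] [Module.Finite Λ M]
    (htors : IsTorsionMod Λ M) (hcf : CompletelyFaithful Λ M) :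
    IsPseudoNull Λ (pPrimarySub Λ p M) := by
  haveI : Nontrivial Λ := nontrivial_of_ne _ _ hpΛ
  haveI : IsNoetherian Λ M := isNoetherian_of_isNoetherianRing_of_finite Λ M
  set B := pPrimarySub Λ p M with hBdef
  haveI hfinN : Module.Finite Λ ↥B := Module.Finite.iff_fg.mpr (IsNoetherian.noetherian B)
  have htorsN : IsTorsionMod Λ ↥B := by
    intro m
    obtain ⟨l, hl, hlm⟩ := htors m.1
    exact ⟨l, hl, Subtype.ext (by simpa using hlm)⟩
  by_contra hps
  -- B is pseudo-related to a subquotient of M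
  have hrel : PseudoRelated Λ (↥B) M := by
    refine ⟨⊥, B, bot_le, ⊤, ⊥,
      (⊥ : Submodule Λ (↥B ⧸ (⊥ : Submodule Λ M).comap B.subtype)).mkQ ∘ₗ
        ((⊥ : Submodule Λ M).comap B.subtype).mkQ ∘ₗ (⊤ : Submodule Λ ↥B).subtype, ?_, ?_, ?_, ?_⟩
    · haveI : Subsingleton (↥B ⧸ (⊤ : Submodule Λ ↥B)) :=
        Submodule.Quotient.subsingleton_iff.mpr rfl
      exact isPseudoNull_of_subsingleton Λ _
    · exact isPseudoNull_of_subsingleton Λ _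
    · have hinj : Function.Injective ((⊥ : Submodule Λ (↥B ⧸ (⊥ : Submodule Λ M).comap
          B.subtype)).mkQ ∘ₗ ((⊥ : Submodule Λ M).comap B.subtype).mkQ ∘ₗ
          (⊤ : Submodule Λ ↥B).subtype) := by
        have h1 : Function.Injective ((⊥ : Submodule Λ (↥B ⧸ (⊥ : Submodule Λ M).comap
            B.subtype)).mkQ) := by
          rw [← LinearMap.ker_eq_bot, Submodule.ker_mkQ]
        have h2 : Function.Injective (((⊥ : Submodule Λ M).comap B.subtype).mkQ) := by
          rw [← LinearMap.ker_eq_bot, Submodule.ker_mkQ, Submodule.comap_bot,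
            Submodule.ker_subtype]
        exact h1.comp (h2.comp (Submodule.injective_subtype _))
      have hker : LinearMap.ker ((⊥ : Submodule Λ (↥B ⧸ (⊥ : Submodule Λ M).comap
          B.subtype)).mkQ ∘ₗ ((⊥ : Submodule Λ M).comap B.subtype).mkQ ∘ₗ
          (⊤ : Submodule Λ ↥B).subtype) = ⊥ := LinearMap.ker_eq_bot.mpr hinj
      haveI : Subsingleton ↥(LinearMap.ker ((⊥ : Submodule Λ (↥B ⧸ (⊥ : Submodule Λ M).comap
          B.subtype)).mkQ ∘ₗ ((⊥ : Submodule Λ M).comap B.subtype).mkQ ∘ₗ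
          (⊤ : Submodule Λ ↥B).subtype)) := by
        rw [hker]; infer_instance
      exact isPseudoNull_of_subsingleton Λ _
    · have hsurj : Function.Surjective ((⊥ : Submodule Λ (↥B ⧸ (⊥ : Submodule Λ M).comap
          B.subtype)).mkQ ∘ₗ ((⊥ : Submodule Λ M).comap B.subtype).mkQ ∘ₗ
          (⊤ : Submodule Λ ↥B).subtype) := by
        refine (Submodule.mkQ_surjective _).comp ((Submodule.mkQ_surjective _).comp ?_)
        rintro x
        exact ⟨⟨x, trivial⟩, rfl⟩
      have hrange : LinearMap.range ((⊥ : Submodule Λ (↥B ⧸ (⊥ : Submodule Λ M).comap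
          B.subtype)).mkQ ∘ₗ ((⊥ : Submodule Λ M).comap B.subtype).mkQ ∘ₗ
          (⊤ : Submodule Λ ↥B).subtype) = ⊤ := LinearMap.range_eq_top.mpr hsurj
      haveI : Subsingleton ((((↥B ⧸ (⊥ : Submodule Λ M).comap B.subtype)) ⧸
          (⊥ : Submodule Λ (↥B ⧸ (⊥ : Submodule Λ M).comap B.subtype))) ⧸
          LinearMap.range ((⊥ : Submodule Λ (↥B ⧸ (⊥ : Submodule Λ M).comap
          B.subtype)).mkQ ∘ₗ ((⊥ : Submodule Λ M).comap B.subtype).mkQ ∘ₗ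
          (⊤ : Submodule Λ ↥B).subtype)) :=
        Submodule.Quotient.subsingleton_iff.mpr hrange
      exact isPseudoNull_of_subsingleton Λ _
  -- find a uniform power of p killing B
  obtain ⟨S, hS⟩ := IsNoetherian.noetherian B
  classical
  let g : M → ℕ := fun s => if h : ∃ k : ℕ, ((p : Λ) ^ k) • s = 0 then h.choose else 0
  set K := S.sup g with hK
  have hkill : ∀ s ∈ (S : Set M), s ∈ pPowerKilled Λ p K M := by
    intro s hs
    have hmem : s ∈ B := hS ▸ Submodule.subset_span hs
    obtain ⟨k, hk⟩ := (mem_pPrimarySub s).mp hmem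
    have hex : ∃ k : ℕ, ((p : Λ) ^ k) • s = 0 := ⟨k, hk⟩
    have hgs : ((p : Λ) ^ (g s)) • s = 0 := by
      simp only [g, dif_pos hex]
      exact hex.choose_spec
    have hle : g s ≤ K := Finset.le_sup hs
    show ((p : Λ) ^ K) • s = 0
    calc ((p : Λ) ^ K) • s = ((p : Λ) ^ (K - g s) * (p : Λ) ^ (g s)) • s := by
          rw [← pow_add, Nat.sub_add_cancel hle]
      _ = ((p : Λ) ^ (K - g s)) • (((p : Λ) ^ (g s)) • s) := by rw [mul_smul]
      _ = 0 := by rw [hgs, smul_zero]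
  have hBle : B ≤ pPowerKilled Λ p K M := by
    rw [← hS]
    exact Submodule.span_le.mpr hkill
  have hann : ∀ n : ↥B, ((p : Λ) ^ K) • n = 0 := by
    intro n
    have hn : ((p : Λ) ^ K) • (n : M) = 0 := hBle n.2
    exact Subtype.ext (by simpa using hn)
  have := hcf (↥B) hfinN htorsN hps hrel ((p : Λ) ^ K) hann
  exact pow_ne_zero K hpΛ this
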